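/- With Ξ and φ_{ij}, (i,j) ∈ S, as in the Newton-basis construction for a generalized x-tower set, the family {φ_{ij} : (i,j) ∈ S} is linearly independent over F, and its span equals the span of the monomials {x^i y^j : (i,j) ∈ S}; in particular it is a basis of a |S|-dimensional space solving the Lagrange interpolation problem on Ξ uniquely. -/

import Mathlib

open MvPolynomial

lemma prod_X_sub_C_mem_span' {F : Type*} [Field F] {σ : Type*} (k : σ) (c : ℕ → F) (n : ℕ) :
    (∏ t ∈ Finset.range n, (X k - C (c t))) ∈
      Submodule.span F ((fun t => (X k : MvPolynomial σ F) ^ t) '' Set.Iic n) := by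
  induction n with
  | zero =>
    rw [Finset.prod_range_zero]
    exact Submodule.subset_span ⟨0, Set.mem_Iic.mpr le_rfl, pow_zero _⟩
  | succ n ih =>
    rw [Finset.prod_range_succ, mul_sub]
    refine sub_mem ?_ ?_
    · have h1 : (∏ t ∈ Finset.range n, (X k - C (c t))) * X k ∈
        Submodule.map (LinearMap.mulRight F (X k))
          (Submodule.span F ((fun t => (X k : MvPolynomial σ F) ^ t) '' Set.Iic n)) :=
        ⟨_, ih, rfl⟩
      rw [Submodule.map_span] at h1
      refine Submodule.span_mono ?_ h1
      rintro _ ⟨_, ⟨t, ht, rfl⟩, rfl⟩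
      exact ⟨t + 1, Set.mem_Iic.mpr (Nat.succ_le_succ (Set.mem_Iic.mp ht)), (pow_succ _ _).symm⟩
    · rw [mul_comm, ← smul_eq_C_mul]
      exact Submodule.smul_mem _ _
        (Submodule.span_mono (Set.image_mono (Set.Iic_subset_Iic.mpr (Nat.le_succ n))) ih)

theorem stmt_14 {F : Type*} [Field F]
    (ν : ℕ) (m : ℕ → ℕ) (y : ℕ → F) (xc : ℕ → ℕ → F)
    (hm : ∀ j, j < ν → m (j + 1) < m j)
    (hy : ∀ j j', j ≤ ν → j' ≤ ν → y j = y j' → j = j')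
    (hxc : ∀ n, n ≤ ν → ∀ i i', i ≤ m n → i' ≤ m n → xc n i = xc n i' → i = i')
    (Φ : ℕ → ℕ → MvPolynomial (Fin 2) F)
    (hΦ : ∀ i j, Φ i j =
      C (((∏ t ∈ Finset.range j, (y j - y t)) * ∏ s ∈ Finset.range i, (xc j i - xc j s))⁻¹) *
        (∏ t ∈ Finset.range j, (X 1 - C (y t))) * ∏ s ∈ Finset.range i, (X 0 - C (xc j s))) :
    LinearIndependent F
        (fun q : {q : ℕ × ℕ // q.2 ≤ ν ∧ q.1 ≤ m q.2} => Φ q.1.1 q.1.2) ∧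
      Submodule.span F
          (Set.range (fun q : {q : ℕ × ℕ // q.2 ≤ ν ∧ q.1 ≤ m q.2} => Φ q.1.1 q.1.2)) =
        Submodule.span F
          (Set.range (fun q : {q : ℕ × ℕ // q.2 ≤ ν ∧ q.1 ≤ m q.2} =>
            (X 0 ^ q.1.1 * X 1 ^ q.1.2 : MvPolynomial (Fin 2) F))) ∧
      ∀ vals : {q : ℕ × ℕ // q.2 ≤ ν ∧ q.1 ≤ m q.2} → F,
        ∃! p : MvPolynomial (Fin 2) F,
          p ∈ Submodule.span F
              (Set.range (fun q : {q : ℕ × ℕ // q.2 ≤ ν ∧ q.1 ≤ m q.2} => Φ q.1.1 q.1.2)) ∧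
            ∀ q : {q : ℕ × ℕ // q.2 ≤ ν ∧ q.1 ≤ m q.2},
              MvPolynomial.eval ![xc q.1.2 q.1.1, y q.1.2] p = vals q := by
  classical
  -- m is antitone on [0, ν]
  have hanti : ∀ t j, t ≤ j → j ≤ ν → m j ≤ m t := by
    intro t j htj hjν
    induction j with
    | zero => simp [Nat.le_zero.mp htj]
    | succ j ih =>
      rcases Nat.eq_or_lt_of_le htj with h | h
      · simp [h]
      · exact le_trans (le_of_lt (hm j (Nat.lt_of_lt_of_le (Nat.lt_succ_self j) hjν)))
          (ih (Nat.lt_succ_iff.mp h) (le_trans (Nat.le_succ j) hjν))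
  haveI : Fintype {q : ℕ × ℕ // q.2 ≤ ν ∧ q.1 ≤ m q.2} :=
    Fintype.ofInjective
      (fun q : {q : ℕ × ℕ // q.2 ≤ ν ∧ q.1 ≤ m q.2} =>
        ((⟨q.1.2, Nat.lt_succ_of_le q.2.1⟩ : Fin (ν + 1)),
         (⟨q.1.1, Nat.lt_succ_of_le (le_trans q.2.2 (hanti 0 q.1.2 (Nat.zero_le _) q.2.1))⟩ :
            Fin (m 0 + 1))))
      (by
        intro a b h
        have h1 := congrArg (fun p => (p.1 : ℕ)) h
        have h2 := congrArg (fun p => (p.2 : ℕ)) h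
        exact Subtype.ext (Prod.ext h2 h1))
  -- lex-ordered copy of the index set
  let κ := {p : ℕ ×ₗ ℕ // (ofLex p).1 ≤ ν ∧ (ofLex p).2 ≤ m (ofLex p).1}
  let e : {q : ℕ × ℕ // q.2 ≤ ν ∧ q.1 ≤ m q.2} ≃ κ :=
    { toFun := fun q => ⟨toLex (q.1.2, q.1.1), q.2.1, q.2.2⟩
      invFun := fun k => ⟨((ofLex k.1).2, (ofLex k.1).1), k.2.1, k.2.2⟩
      left_inv := fun q => rfl
      right_inv := fun k => rfl }
  haveI : Fintype κ := Fintype.ofEquiv _ e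
  let Φ' : κ → MvPolynomial (Fin 2) F := fun k => Φ (ofLex k.1).2 (ofLex k.1).1
  let pt : κ → Fin 2 → F := fun k => ![xc (ofLex k.1).1 (ofLex k.1).2, y (ofLex k.1).1]
  let N : Matrix κ κ F := Matrix.of fun k k' => MvPolynomial.eval (pt k) (Φ' k')
  have hlt : ∀ a b : κ, a < b ↔
      ((ofLex a.1).1 < (ofLex b.1).1 ∨
        ((ofLex a.1).1 = (ofLex b.1).1 ∧ (ofLex a.1).2 < (ofLex b.1).2)) := by
    intro a b
    rw [← Subtype.coe_lt_coe]
    exact Prod.Lex.lt_iff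
  -- value of the evaluation matrix
  have hNval : ∀ k k' : κ, N k k' =
      ((∏ t ∈ Finset.range (ofLex k'.1).1, (y (ofLex k'.1).1 - y t)) *
        ∏ s ∈ Finset.range (ofLex k'.1).2, (xc (ofLex k'.1).1 (ofLex k'.1).2 - xc (ofLex k'.1).1 s))⁻¹ *
      ((∏ t ∈ Finset.range (ofLex k'.1).1, (y (ofLex k.1).1 - y t)) *
        ∏ s ∈ Finset.range (ofLex k'.1).2, (xc (ofLex k.1).1 (ofLex k.1).2 - xc (ofLex k'.1).1 s)) := by
    intro k k'
    show MvPolynomial.eval (pt k) (Φ (ofLex k'.1).2 (ofLex k'.1).1) = _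
    rw [hΦ]
    simp only [map_mul, map_prod, map_sub, eval_C, eval_X]
    simp only [pt, Matrix.cons_val_zero, Matrix.cons_val_one, Matrix.head_cons]
    ring
  -- triangularity
  have htri : ∀ k k' : κ, k < k' → N k k' = 0 := by
    intro k k' hkk'
    rw [hNval]
    rcases (hlt k k').mp hkk' with h | ⟨h1, h2⟩
    · have : (∏ t ∈ Finset.range (ofLex k'.1).1, (y (ofLex k.1).1 - y t)) = 0 :=
        Finset.prod_eq_zero (Finset.mem_range.mpr h) (sub_self _)
      rw [this, zero_mul, mul_zero]
    · have : (∏ s ∈ Finset.range (ofLex k'.1).2,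
          (xc (ofLex k.1).1 (ofLex k.1).2 - xc (ofLex k'.1).1 s)) = 0 := by
        refine Finset.prod_eq_zero (Finset.mem_range.mpr h2) ?_
        rw [h1, sub_self]
      rw [this, mul_zero, mul_zero]
  -- diagonal entries are 1
  have hdiag : ∀ k : κ, N k k = 1 := by
    intro k
    rw [hNval]
    refine inv_mul_cancel₀ ?_
    refine mul_ne_zero ?_ ?_
    · refine Finset.prod_ne_zero_iff.mpr fun t ht => sub_ne_zero.mpr fun hc => ?_
      have h3 := Finset.mem_range.mp ht
      have h4 := hy (ofLex k.1).1 t k.2.1 (le_trans (le_of_lt h3) k.2.1) hc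
      omega
    · refine Finset.prod_ne_zero_iff.mpr fun s hs => sub_ne_zero.mpr fun hc => ?_
      have h3 := Finset.mem_range.mp hs
      have h4 := hxc (ofLex k.1).1 k.2.1 (ofLex k.1).2 s k.2.2
        (le_trans (le_of_lt h3) k.2.2) hc
      omega
  have hdet : IsUnit N.det := by
    have : N.det = ∏ k : κ, N k k :=
      Matrix.det_of_lowerTriangular N (fun i j hij => htri i j hij)
    rw [this]
    simp [hdiag]
  -- the inverse of N solves linear systems
  have hmulinv : ∀ c : κ → F, N.mulVec c = 0 → c = 0 := by
    intro c hc
    have h1 : N⁻¹.mulVec (N.mulVec c) = c := by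
      rw [Matrix.mulVec_mulVec, Matrix.nonsing_inv_mul N hdet, Matrix.one_mulVec]
    rw [hc, Matrix.mulVec_zero] at h1
    exact h1.symm
  have hevalsum : ∀ (c : κ → F) (k : κ),
      MvPolynomial.eval (pt k) (∑ k' : κ, c k' • Φ' k') = N.mulVec c k := by
    intro c k
    rw [map_sum]
    simp only [smul_eq_C_mul, map_mul, eval_C]
    simp [N, Matrix.mulVec, dotProduct, mul_comm]
  -- Part 1 : linear independence
  have hli : LinearIndependent F
      (fun q : {q : ℕ × ℕ // q.2 ≤ ν ∧ q.1 ≤ m q.2} => Φ q.1.1 q.1.2) := by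
    rw [Fintype.linearIndependent_iff]
    intro g hg q
    have hsum : ∑ k : κ, g (e.symm k) • Φ' k = 0 :=
      ((Fintype.sum_equiv e (fun q => g q • Φ q.1.1 q.1.2)
        (fun k => g (e.symm k) • Φ' k) (fun q => rfl)).symm).trans hg
    have h0 : N.mulVec (fun k => g (e.symm k)) = 0 := by
      funext k
      rw [← hevalsum, hsum, map_zero, Pi.zero_apply]
    exact congrFun (hmulinv _ h0) (e q)
  -- Part 2 : span equality
  have hspan_le : Submodule.span F
      (Set.range (fun q : {q : ℕ × ℕ // q.2 ≤ ν ∧ q.1 ≤ m q.2} => Φ q.1.1 q.1.2)) ≤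
    Submodule.span F
      (Set.range (fun q : {q : ℕ × ℕ // q.2 ≤ ν ∧ q.1 ≤ m q.2} =>
        (X 0 ^ q.1.1 * X 1 ^ q.1.2 : MvPolynomial (Fin 2) F))) := by
    rw [Submodule.span_le]
    rintro _ ⟨⟨⟨i, j⟩, hjν, him⟩, rfl⟩
    show Φ i j ∈ _
    rw [hΦ, mul_assoc, ← smul_eq_C_mul]
    refine Submodule.smul_mem _ _ ?_
    have hP := prod_X_sub_C_mem_span' (1 : Fin 2) y j
    have hQ := prod_X_sub_C_mem_span' (0 : Fin 2) (xc j) i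
    have hmul := Submodule.mul_mem_mul hP hQ
    rw [Submodule.span_mul_span] at hmul
    refine Submodule.span_le.mpr ?_ hmul
    rintro _ ⟨p1, ⟨t, ht, rfl⟩, p2, ⟨s, hs, rfl⟩, rfl⟩
    refine Submodule.subset_span
      ⟨⟨(s, t), le_trans (Set.mem_Iic.mp ht) hjν,
        le_trans (Set.mem_Iic.mp hs) (le_trans him (hanti t j (Set.mem_Iic.mp ht) hjν))⟩,
       mul_comm _ _⟩
  have hmono_li : LinearIndependent F
      (fun q : {q : ℕ × ℕ // q.2 ≤ ν ∧ q.1 ≤ m q.2} =>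
        (X 0 ^ q.1.1 * X 1 ^ q.1.2 : MvPolynomial (Fin 2) F)) := by
    have hinj : Function.Injective
        (fun q : {q : ℕ × ℕ // q.2 ≤ ν ∧ q.1 ≤ m q.2} =>
          (Finsupp.single (0 : Fin 2) q.1.1 + Finsupp.single (1 : Fin 2) q.1.2)) := by
      intro a b h
      have h0 := DFunLike.congr_fun h (0 : Fin 2)
      have h1 := DFunLike.congr_fun h (1 : Fin 2)
      simp [Finsupp.single_apply] at h0 h1
      exact Subtype.ext (Prod.ext h0 h1)
    have hfun : (fun q : {q : ℕ × ℕ // q.2 ≤ ν ∧ q.1 ≤ m q.2} =>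
        (X 0 ^ q.1.1 * X 1 ^ q.1.2 : MvPolynomial (Fin 2) F)) =
        (fun q : {q : ℕ × ℕ // q.2 ≤ ν ∧ q.1 ≤ m q.2} =>
          (basisMonomials (Fin 2) F)
            (Finsupp.single (0 : Fin 2) q.1.1 + Finsupp.single (1 : Fin 2) q.1.2)) := by
      funext q
      simp only [coe_basisMonomials]
      rw [X_pow_eq_monomial, X_pow_eq_monomial, monomial_mul, one_mul]
    rw [hfun]
    exact (Module.Basis.linearIndependent _).comp _ hinj
  haveI : Module.Finite F (Submodule.span F
      (Set.range (fun q : {q : ℕ × ℕ // q.2 ≤ ν ∧ q.1 ≤ m q.2} =>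
        (X 0 ^ q.1.1 * X 1 ^ q.1.2 : MvPolynomial (Fin 2) F)))) :=
    Module.Finite.span_of_finite F (Set.finite_range _)
  have hspan_eq := Submodule.eq_of_le_of_finrank_le hspan_le
    (by rw [finrank_span_eq_card hmono_li, finrank_span_eq_card hli])
  refine ⟨hli, hspan_eq, ?_⟩
  -- Part 3 : unique interpolation
  intro vals
  have h2 : N.mulVec (N⁻¹.mulVec (fun k => vals (e.symm k))) = fun k => vals (e.symm k) := by
    rw [Matrix.mulVec_mulVec, Matrix.mul_nonsing_inv N hdet, Matrix.one_mulVec]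
  set c : κ → F := N⁻¹.mulVec (fun k => vals (e.symm k)) with hc
  have hmem : (∑ k : κ, c k • Φ' k) ∈ Submodule.span F
      (Set.range (fun q : {q : ℕ × ℕ // q.2 ≤ ν ∧ q.1 ≤ m q.2} => Φ q.1.1 q.1.2)) :=
    Submodule.sum_mem _ fun k _ =>
      Submodule.smul_mem _ _ (Submodule.subset_span ⟨e.symm k, rfl⟩)
  refine ⟨∑ k : κ, c k • Φ' k, ⟨hmem, ?_⟩, ?_⟩
  · intro q
    calc MvPolynomial.eval ![xc q.1.2 q.1.1, y q.1.2] (∑ k : κ, c k • Φ' k)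
        = N.mulVec c (e q) := hevalsum c (e q)
      _ = vals q := congrFun h2 (e q)
  · rintro p' ⟨hmem', hvals'⟩
    have hd : p' - ∑ k : κ, c k • Φ' k ∈ Submodule.span F
        (Set.range (fun q : {q : ℕ × ℕ // q.2 ≤ ν ∧ q.1 ≤ m q.2} => Φ q.1.1 q.1.2)) :=
      sub_mem hmem' hmem
    obtain ⟨g, hg⟩ := (Submodule.mem_span_range_iff_exists_fun F).mp hd
    have hgsum : ∑ k : κ, g (e.symm k) • Φ' k = p' - ∑ k : κ, c k • Φ' k :=
      ((Fintype.sum_equiv e (fun q => g q • Φ q.1.1 q.1.2)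
        (fun k => g (e.symm k) • Φ' k) (fun q => rfl)).symm).trans hg
    have h0 : N.mulVec (fun k => g (e.symm k)) = 0 := by
      funext k
      rw [← hevalsum, hgsum, map_sub]
      have e1 : MvPolynomial.eval (pt k) p' = vals (e.symm k) := hvals' (e.symm k)
      have e2 : MvPolynomial.eval (pt k) (∑ k' : κ, c k' • Φ' k') = vals (e.symm k) := by
        rw [hevalsum c k]
        exact congrFun h2 k
      rw [e1, e2, sub_self, Pi.zero_apply]
    have hg0 := hmulinv _ h0
    have hzero : p' - ∑ k : κ, c k • Φ' k = 0 := by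
      rw [← hgsum]
      exact Finset.sum_eq_zero fun k _ => by rw [congrFun hg0 k, Pi.zero_apply, zero_smul]
    exact sub_eq_zero.mp hzero
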